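/- Let K ≥ 0, let f : ℝ → ℝ be a measurable K-convex function, and let d be a real-valued random variable such that for every y ∈ ℝ the random variable f(y − d) is integrable. Then the function g : ℝ → ℝ defined by g(y) := E[f(y − d)] is K-convex. -/

import Mathlib

open MeasureTheory

/-- `f` is `K`-convex: for all `y`, `z ≥ 0` and `b > 0`,
`K + f (y + z) ≥ f y + (z / b) * (f y - f (y - b))`. -/
def KConvex (K : ℝ) (f : ℝ → ℝ) : Prop :=
  ∀ y z b : ℝ, 0 ≤ z → 0 < b → f y + (z / b) * (f y - f (y - b)) ≤ K + f (y + z)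

/-- If `f` is a measurable `K`-convex function (`K ≥ 0`) and `d` is a
real-valued random variable such that `f (y - d)` is integrable for every `y`, then
`g y := E[f (y - d)]` is `K`-convex. -/
theorem kConvex_expectation
    {Ω : Type*} [MeasurableSpace Ω] (μ : Measure Ω) [IsProbabilityMeasure μ]
    (K : ℝ) (hK : 0 ≤ K) (f : ℝ → ℝ) (hfmeas : Measurable f) (hf : KConvex K f)
    (d : Ω → ℝ) (hdmeas : Measurable d)
    (hint : ∀ y : ℝ, Integrable (fun a => f (y - d a)) μ) :
    KConvex K (fun y => ∫ a, f (y - d a) ∂μ) := by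
  intro y z b hz hb
  have h1 : ∀ a : Ω, f (y - d a) + (z / b) * (f (y - d a) - f ((y - b) - d a))
      ≤ K + f ((y + z) - d a) := by
    intro a
    have := hf (y - d a) z b hz hb
    have e1 : y - d a - b = (y - b) - d a := by ring
    have e2 : y - d a + z = (y + z) - d a := by ring
    rw [e1, e2] at this
    exact this
  have hsub : Integrable (fun a => f (y - d a) - f ((y - b) - d a)) μ :=
    (hint y).sub (hint (y - b))
  have hmul : Integrable (fun a => (z / b) * (f (y - d a) - f ((y - b) - d a))) μ :=
    hsub.const_mul _
  have hlhs : Integrable (fun a => f (y - d a) + (z / b) * (f (y - d a) - f ((y - b) - d a))) μ :=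
    (hint y).add hmul
  have hrhs : Integrable (fun a => K + f ((y + z) - d a)) μ :=
    (integrable_const K).add (hint (y + z))
  have := integral_mono hlhs hrhs h1
  have eL : (∫ a, (f (y - d a) + (z / b) * (f (y - d a) - f ((y - b) - d a))) ∂μ)
      = (∫ a, f (y - d a) ∂μ) + (z / b) * ((∫ a, f (y - d a) ∂μ) - ∫ a, f ((y - b) - d a) ∂μ) := by
    rw [integral_add (hint y) hmul, MeasureTheory.integral_const_mul, integral_sub (hint y) (hint (y - b))]
  have eR : (∫ a, (K + f ((y + z) - d a)) ∂μ) = K + ∫ a, f ((y + z) - d a) ∂μ := by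
    rw [integral_add (integrable_const K) (hint (y + z)), integral_const, probReal_univ]
    simp
  rw [eL, eR] at this
  simpa using this
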